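/- Let σ be a sorted rectangular tableau whose top row has block decomposition B^{(1)},...,B^{(ℓ)}. Then perm_t(σ) = perm_t(σ restricted to its bottom m−1 rows) · Π_{i=1}^ℓ perm_t(B^{(i)}), where perm_t of a rectangular tableau with u_1,...,u_j multiplicities of identical columns is the t-multinomial binom(n; u_1,...,u_j)_t, and perm_t(B) of a block with entry multiplicities b_1,...,b_k is binom(|B|; b_1,...,b_k)_t. -/

import Mathlib

/-- The `t`-analogue of `n!`: `[n]_t! = ∏_{i=1}^{n} (1 + t + ⋯ + t^{i-1})`,
at the generic parameter `t = X` in the field `ℚ(t)` of rational functions. -/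
noncomputable def tfactX (n : ℕ) : RatFunc ℚ :=
  ∏ i ∈ Finset.range n, ∑ j ∈ Finset.range (i + 1), (RatFunc.X : RatFunc ℚ) ^ j

/-- The Gaussian (t-)multinomial coefficient attached to a function `f` on `Fin n`:
`[n]_t! / ∏_v [m_v]_t!` where `m_v` are the sizes of the fibers of `f`. -/
noncomputable def permT {n : ℕ} {β : Type*} [DecidableEq β] (f : Fin n → β) : RatFunc ℚ :=
  tfactX n /
    ∏ v ∈ Finset.image f Finset.univ,
      tfactX ((Finset.univ.filter (fun j => f j = v)).card)

/-- The triple `(a, b, c)` (with `b` above `c` in a column and `a` to the right of `b`)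
is counterclockwise. -/
def ccw (a b c : ℕ) : Prop := (a < b ∧ b ≤ c) ∨ (c < a ∧ a < b) ∨ (b ≤ c ∧ c < a)

/-- The column order `A ◁ B` on columns of height `m+1` (entries listed bottom to top):
either `A 0 < B 0`, or the columns agree strictly below some row `r ≥ 1` and the cells
containing `B r`, `A r`, `A (r-1)` do not form a counterclockwise triple. -/
def colLhd {m : ℕ} (A B : Fin (m + 1) → ℕ) : Prop :=
  A 0 < B 0 ∨
    ∃ r r' : Fin (m + 1), (r' : ℕ) + 1 = (r : ℕ) ∧
      (∀ i : Fin (m + 1), (i : ℕ) < (r : ℕ) → A i = B i) ∧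
      ¬ ccw (B r) (A r) (A r')

lemma tfactX_ne_zero (n : ℕ) : tfactX n ≠ 0 := by
  unfold tfactX
  apply Finset.prod_ne_zero_iff.2
  intro i _
  have : (∑ j ∈ Finset.range (i + 1), (RatFunc.X : RatFunc ℚ) ^ j) =
      algebraMap (Polynomial ℚ) (RatFunc ℚ) (∑ j ∈ Finset.range (i + 1), Polynomial.X ^ j) := by
    rw [map_sum]
    simp [RatFunc.algebraMap_X]
  rw [this]
  intro h
  have h2 : (∑ j ∈ Finset.range (i + 1), (Polynomial.X : Polynomial ℚ) ^ j) = 0 :=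
    RatFunc.algebraMap_injective ℚ (by simpa using h)
  have := congrArg (Polynomial.eval (1 : ℚ)) h2
  simp at this
  exact (by positivity : (0:ℚ) < i + 1).ne' this

/-- Let `σ` be a sorted rectangular tableau with `m+1` rows and `n` columns (row `0` at
the bottom, row `m` on top).  Writing `col j` for its columns, `bot j` for the columns of
its bottom `m` rows, and `top j` for the top-row entries, the blocks of the top row are
the fibers of `bot`, and
`perm_t(σ) = perm_t(σ|_{bottom m rows}) · ∏_{blocks B} perm_t(B)`,
where `perm_t(B)` is the t-multinomial of the multiplicities of the distinct top-row
entries within the block `B`. -/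
theorem stmt11 (m n : ℕ) (σ : Fin (m + 1) → Fin n → ℕ)
    (hsorted : ∀ j₁ j₂ : Fin n, j₁ < j₂ →
      (fun i => σ i j₁) = (fun i => σ i j₂) ∨ colLhd (fun i => σ i j₁) (fun i => σ i j₂)) :
    permT (fun j : Fin n => fun i : Fin (m + 1) => σ i j) =
      permT (fun j : Fin n => fun i : Fin m => σ i.castSucc j) *
        ∏ v ∈ Finset.image (fun j : Fin n => fun i : Fin m => σ i.castSucc j) Finset.univ,
          (tfactX ((Finset.univ.filter
              (fun j : Fin n => (fun i : Fin m => σ i.castSucc j) = v)).card) /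
            ∏ w ∈ Finset.image (fun j : Fin n => σ (Fin.last m) j)
                (Finset.univ.filter (fun j : Fin n => (fun i : Fin m => σ i.castSucc j) = v)),
              tfactX ((Finset.univ.filter (fun j : Fin n =>
                (fun i : Fin m => σ i.castSucc j) = v ∧ σ (Fin.last m) j = w)).card)) := by
  classical
  set bot : Fin n → (Fin m → ℕ) := fun j => fun i : Fin m => σ i.castSucc j with hbot
  set top : Fin n → ℕ := fun j => σ (Fin.last m) j with htop
  set col : Fin n → (Fin (m + 1) → ℕ) := fun j => fun i => σ i j with hcol
  set g : Fin n → (Fin m → ℕ) × ℕ := fun j => (bot j, top j) with hg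
  set π : (Fin m → ℕ) × ℕ → (Fin (m + 1) → ℕ) :=
    fun p => fun i => Fin.lastCases p.2 p.1 i with hπ
  have hπg : ∀ j, π (g j) = col j := by
    intro j
    funext i
    induction i using Fin.lastCases with
    | last => simp [hπ, hg, htop, hcol]
    | cast i => simp [hπ, hg, hbot, hcol]
  have hπinj : Function.Injective π := by
    intro p q h
    have h1 : p.1 = q.1 := by
      funext i
      have := congrFun h i.castSucc
      simpa [hπ] using this
    have h2 : p.2 = q.2 := by
      have := congrFun h (Fin.last m)
      simpa [hπ] using this
    exact Prod.ext h1 h2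
  have hcolg : ∀ j p, col j = π p ↔ g j = p := by
    intro j p
    constructor
    · intro h
      apply hπinj
      rw [hπg, h]
    · intro h
      rw [← h, hπg]
  -- the image of col is the image of π over the image of g
  have himg : Finset.image col Finset.univ = (Finset.image g Finset.univ).image π := by
    rw [Finset.image_image]
    apply Finset.image_congr
    intro j _
    exact (hπg j).symm
  -- LHS rewrite
  have hLHS : permT col = tfactX n /
      ∏ p ∈ Finset.image g Finset.univ,
        tfactX ((Finset.univ.filter (fun j => g j = p)).card) := by
    unfold permT
    rw [himg, Finset.prod_image (fun p _ q _ h => hπinj h)]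
    congr 1
    apply Finset.prod_congr rfl
    intro p _
    congr 2
    apply Finset.filter_congr
    intro j _
    first
    | exact hcolg j p
    | exact propext (hcolg j p)
  -- pair fibers equal g-fibers
  have hpairfib : ∀ v w, (Finset.univ.filter (fun j : Fin n => bot j = v ∧ top j = w)) =
      (Finset.univ.filter (fun j : Fin n => g j = (v, w))) := by
    intro v w
    apply Finset.filter_congr
    intro j _
    simp only [hg, Prod.mk.injEq, eq_iff_iff]
  -- fiberwise decomposition of the product over image g
  have hfiber : ∏ p ∈ Finset.image g Finset.univ,
        tfactX ((Finset.univ.filter (fun j => g j = p)).card) =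
      ∏ v ∈ Finset.image bot Finset.univ,
        ∏ w ∈ Finset.image top (Finset.univ.filter (fun j => bot j = v)),
          tfactX ((Finset.univ.filter (fun j : Fin n => bot j = v ∧ top j = w)).card) := by
    have hmaps : ∀ p ∈ Finset.image g Finset.univ, p.1 ∈ Finset.image bot Finset.univ := by
      intro p hp
      simp only [Finset.mem_image, Finset.mem_univ, true_and] at hp ⊢
      obtain ⟨j, rfl⟩ := hp
      exact ⟨j, rfl⟩
    rw [← Finset.prod_fiberwise_of_maps_to hmaps
        (fun p => tfactX ((Finset.univ.filter (fun j => g j = p)).card))]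
    apply Finset.prod_congr rfl
    intro v _
    have hset : (Finset.image g Finset.univ).filter (fun p => p.1 = v) =
        (Finset.image top (Finset.univ.filter (fun j => bot j = v))).image
          (fun w => (v, w)) := by
      ext p
      simp only [Finset.mem_filter, Finset.mem_image, Finset.mem_univ, true_and]
      constructor
      · rintro ⟨⟨j, rfl⟩, h1⟩
        exact ⟨top j, ⟨j, by simpa [hg] using h1, rfl⟩, by simp [hg, ← h1]⟩
      · rintro ⟨w, ⟨j, hj, rfl⟩, rfl⟩
        exact ⟨⟨j, by simp [hg, hj]⟩, rfl⟩
    rw [hset, Finset.prod_image (fun a _ b _ h => by simpa using h)]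
    apply Finset.prod_congr rfl
    intro w _
    rw [hpairfib]
  -- now everything is algebra
  have key : permT (fun j : Fin n => fun i : Fin (m + 1) => σ i j) = tfactX n /
      ∏ v ∈ Finset.image bot Finset.univ,
        ∏ w ∈ Finset.image top (Finset.univ.filter (fun j => bot j = v)),
          tfactX ((Finset.univ.filter (fun j : Fin n => bot j = v ∧ top j = w)).card) := by
    rw [← hfiber, ← hLHS]
  rw [key]
  unfold permT
  rw [Finset.prod_div_distrib]
  have hA : (∏ v ∈ Finset.image bot Finset.univ,
      tfactX ((Finset.univ.filter (fun j => bot j = v)).card)) ≠ 0 :=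
    Finset.prod_ne_zero_iff.2 (fun v _ => tfactX_ne_zero _)
  have hD : (∏ v ∈ Finset.image bot Finset.univ,
      ∏ w ∈ Finset.image top (Finset.univ.filter (fun j => bot j = v)),
        tfactX ((Finset.univ.filter (fun j : Fin n => bot j = v ∧ top j = w)).card)) ≠ 0 :=
    Finset.prod_ne_zero_iff.2 (fun v _ => Finset.prod_ne_zero_iff.2
      (fun w _ => tfactX_ne_zero _))
  field_simp
  exact (eq_div_iff hD).2 (by simp only [hbot]; ring)
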